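/- Let $x_1, \dots, x_m$ be real numbers with $\sum_{i=1}^m x_i = 0$. Then $\sum_{i=1}^m x_i^3 \le \frac{m-2}{m-1}\sqrt{\frac{m-1}{m}}\left(\sum_{i=1}^m x_i^2\right)^{3/2}$. -/

import Mathlib

open Finset

theorem stmt_16 (m : ℕ) (hm : 2 ≤ m) (x : Fin m → ℝ) (hsum : ∑ i, x i = 0) :
    ∑ i, (x i) ^ 3 ≤
      ((m : ℝ) - 2) / ((m : ℝ) - 1) * Real.sqrt (((m : ℝ) - 1) / m) *
        Real.sqrt (∑ i, (x i) ^ 2) ^ 3 := by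
  have hm2 : (2:ℝ) ≤ (m:ℝ) := by exact_mod_cast hm
  have hm1 : (1:ℝ) ≤ (m:ℝ) - 1 := by linarith
  set Q := ∑ i, x i ^ 2 with hQ
  have hQ0 : 0 ≤ Q := Finset.sum_nonneg fun i _ => sq_nonneg _
  have hne : (univ : Finset (Fin m)).Nonempty := ⟨⟨0, by omega⟩, mem_univ _⟩
  obtain ⟨i0, -, hi0⟩ := Finset.exists_max_image univ x hne
  set s := x i0 with hs
  have hs_le : ∀ i, x i ≤ s := fun i => hi0 i (mem_univ i)
  have hs0 : 0 ≤ s := by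
    by_contra h
    push_neg at h
    have : ∑ i, x i < ∑ _i : Fin m, (0:ℝ) :=
      Finset.sum_lt_sum_of_nonempty hne fun i _ => lt_of_le_of_lt (hs_le i) h
    simp [hsum] at this
  -- Cauchy-Schwarz step: s^2 * m ≤ (m-1) * Q
  have hcard : ((univ : Finset (Fin m)).erase i0).card = m - 1 := by
    rw [Finset.card_erase_of_mem (mem_univ i0), Finset.card_univ, Fintype.card_fin]
  have hsum_erase : ∑ j ∈ (univ : Finset (Fin m)).erase i0, x j = -s := by
    rw [Finset.sum_erase_eq_sub (mem_univ i0), hsum]; ring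
  have hsq_erase : ∑ j ∈ (univ : Finset (Fin m)).erase i0, x j ^ 2 = Q - s ^ 2 := by
    rw [Finset.sum_erase_eq_sub (mem_univ i0)]
  have hcauchy : s ^ 2 * (m:ℝ) ≤ ((m:ℝ) - 1) * Q := by
    have := sq_sum_le_card_mul_sum_sq (s := (univ : Finset (Fin m)).erase i0) (f := x)
    rw [hsum_erase, hsq_erase, hcard] at this
    have hcast : ((m - 1 : ℕ) : ℝ) = (m:ℝ) - 1 := by
      rw [Nat.cast_sub (by omega : 1 ≤ m), Nat.cast_one]
    rw [hcast] at this
    nlinarith [this]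
  set c := s / ((m:ℝ) - 1) with hc
  have hc0 : 0 ≤ c := div_nonneg hs0 (by linarith)
  have hcs : c * ((m:ℝ) - 1) = s := div_mul_cancel₀ s (by positivity : (m:ℝ) - 1 ≠ 0)
  -- pointwise cubic bound and summation
  have hsum3 : ∑ i, x i ^ 3 ≤ (s - 2*c) * Q + (2*s*c - c^2) * (∑ i, x i) + (m:ℝ) * (s * c^2) := by
    have hpt : ∀ i ∈ (univ : Finset (Fin m)),
        x i ^ 3 ≤ (s - 2*c) * x i ^ 2 + (2*s*c - c^2) * x i + s * c^2 := by
      intro i _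
      nlinarith [mul_nonneg (sub_nonneg.2 (hs_le i)) (sq_nonneg (x i + c))]
    calc ∑ i, x i ^ 3 ≤ ∑ i, ((s - 2*c) * x i ^ 2 + (2*s*c - c^2) * x i + s * c^2) :=
          Finset.sum_le_sum hpt
      _ = (s - 2*c) * Q + (2*s*c - c^2) * (∑ i, x i) + (m:ℝ) * (s * c^2) := by
          rw [Finset.sum_add_distrib, Finset.sum_add_distrib, ← Finset.mul_sum, ← Finset.mul_sum,
            Finset.sum_const, Finset.card_univ, Fintype.card_fin, nsmul_eq_mul]
  rw [hsum] at hsum3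
  have hstep : (s - 2*c) * Q + (2*s*c - c^2) * 0 + (m:ℝ) * (s * c^2) ≤ (s - c) * Q := by
    -- need m * s * c^2 ≤ c * Q, follows from m s^2 ≤ (m-1) Q, s = c(m-1)
    have hs2 : s^2 = c^2 * ((m:ℝ)-1)^2 := by rw [← hcs]; ring
    have h1 : c^2 * (((m:ℝ)-1) * (m:ℝ)) ≤ Q := by nlinarith [hcauchy, hs2, hm1, sq_nonneg c]
    have h2 : (m:ℝ) * (s * c^2) = c * (c^2 * (((m:ℝ)-1) * (m:ℝ))) := by rw [← hcs]; ring
    have h3 := mul_le_mul_of_nonneg_left h1 hc0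
    linarith
  have hsc : s - c = ((m:ℝ) - 2) / ((m:ℝ) - 1) * s := by
    field_simp [hc]; linear_combination -hcs
  -- final sqrt step
  set t := Real.sqrt Q with ht
  have ht0 : 0 ≤ t := Real.sqrt_nonneg _
  have ht2 : t ^ 2 = Q := Real.sq_sqrt hQ0
  have hr0 : 0 ≤ Real.sqrt (((m:ℝ) - 1) / m) := Real.sqrt_nonneg _
  have hs_le_rt : s ≤ Real.sqrt (((m:ℝ) - 1) / m) * t := by
    rw [← Real.sqrt_mul (by positivity) Q]
    rw [show s = Real.sqrt (s^2) from (Real.sqrt_sq hs0).symm]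
    apply Real.sqrt_le_sqrt
    rw [div_mul_eq_mul_div, le_div_iff₀ (by linarith : (0:ℝ) < (m:ℝ))]
    linarith [hcauchy]
  have hfin : (s - c) * Q ≤ ((m:ℝ) - 2) / ((m:ℝ) - 1) * Real.sqrt (((m:ℝ) - 1) / m) * t ^ 3 := by
    rw [hsc]
    have hco : 0 ≤ ((m:ℝ) - 2) / ((m:ℝ) - 1) := div_nonneg (by linarith) (by linarith)
    have : s * Q ≤ (Real.sqrt (((m:ℝ) - 1) / m) * t) * Q :=
      mul_le_mul_of_nonneg_right hs_le_rt hQ0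
    calc ((m:ℝ) - 2) / ((m:ℝ) - 1) * s * Q
        ≤ ((m:ℝ) - 2) / ((m:ℝ) - 1) * ((Real.sqrt (((m:ℝ) - 1) / m) * t) * Q) := by
          rw [mul_assoc]; exact mul_le_mul_of_nonneg_left this hco
      _ = ((m:ℝ) - 2) / ((m:ℝ) - 1) * Real.sqrt (((m:ℝ) - 1) / m) * t ^ 3 := by
          rw [← ht2]; ring
  linarith [hsum3, hstep, hfin]
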